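/- Let N and N₀ be odd with N₀ | N, and let P_N, P_{N₀} be the characteristic polynomials of the adjacency matrices C_N, C_{N₀} of the modular Collatz graphs. Then P_{N₀}(x) divides P_N(x). -/

import Mathlib

/-- The Collatz function. -/
def collatzT (n : ℕ) : ℕ := if n % 2 = 0 then n / 2 else (3 * n + 1) / 2

/-- Adjacency matrix (over ℤ) of the modular Collatz graph mod `N`:
`c i j` counts `n ∈ {0,…,2N−1}` with `n ≡ i` and `T n ≡ j (mod N)`. -/
def collatzMat (N : ℕ) : Matrix (Fin N) (Fin N) ℤ :=
  fun i j =>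
    (((Finset.range (2 * N)).filter
      (fun n => n % N = i.val ∧ collatzT n % N = j.val)).card : ℤ)

open Finset Matrix Polynomial



lemma two_mul_collatzT (n : ℕ) : 2 * collatzT n = if n % 2 = 0 then n else 3 * n + 1 := by
  unfold collatzT
  split_ifs with h
  · exact Nat.mul_div_cancel' (Nat.dvd_of_mod_eq_zero h)
  · refine Nat.mul_div_cancel' ?_
    omega

lemma collatzT_cond {N : ℕ} (hN : Odd N) (j : Fin N) (n : ℕ) :
    collatzT n % N = j.val ↔ 2 * j.val ≡ (if n % 2 = 0 then n else 3 * n + 1) [MOD N] := by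
  rw [← two_mul_collatzT]
  have h2 : Nat.gcd N 2 = 1 := hN.coprime_two_right
  constructor
  · intro h
    have h1 : collatzT n ≡ j.val [MOD N] := by
      unfold Nat.ModEq
      rw [h]
      exact (Nat.mod_eq_of_lt j.isLt).symm
    exact (h1.mul_left 2).symm
  · intro h
    have h1 : j.val ≡ collatzT n [MOD N] := h.cancel_left_of_coprime h2
    have h2 := h1.symm
    unfold Nat.ModEq at h2
    rw [Nat.mod_eq_of_lt j.isLt] at h2
    exact h2

lemma modeq_add_right_iff {N a b : ℕ} : (a ≡ b + N [MOD N]) ↔ (a ≡ b [MOD N]) := by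
  unfold Nat.ModEq
  rw [Nat.add_mod_right]

lemma collatzMat_apply {N : ℕ} (hN : Odd N) (i j : Fin N) :
    collatzMat N i j =
      (if 2 * j.val ≡ i.val [MOD N] then 1 else 0) +
      (if 2 * j.val ≡ 3 * i.val + 1 [MOD N] then 1 else 0) := by
  have hNpos : 0 < N := hN.pos
  have hset : (Finset.range (2 * N)).filter
      (fun n => n % N = i.val ∧ collatzT n % N = j.val)
      = ({i.val, i.val + N} : Finset ℕ).filter (fun n => collatzT n % N = j.val) := by
    ext n
    simp only [mem_filter, mem_range, mem_insert, mem_singleton]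
    constructor
    · rintro ⟨hn, h1, h2⟩
      refine ⟨?_, h2⟩
      have := Nat.div_add_mod n N
      have hq : n / N < 2 := by
        by_contra hq
        push_neg at hq
        have : 2 * N ≤ N * (n / N) := by
          calc 2 * N = N * 2 := by ring
          _ ≤ N * (n / N) := Nat.mul_le_mul_left _ hq
        omega
      interval_cases h : n / N <;> omega
    · rintro ⟨h1, h2⟩
      have hi := i.isLt
      rcases h1 with h | h <;> subst h <;>
        refine ⟨by omega, ?_, h2⟩ <;> simp [Nat.mod_eq_of_lt hi]
  rw [collatzMat, hset]
  have hne : i.val ≠ i.val + N := by omega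
  rw [show ({i.val, i.val + N} : Finset ℕ) = insert i.val {i.val + N} from rfl]
  rw [filter_insert]
  have hNodd : N % 2 = 1 := Nat.odd_iff.1 hN
  have hcond1 : (collatzT i.val % N = j.val) ↔
      (if i.val % 2 = 0 then 2 * j.val ≡ i.val [MOD N] else 2 * j.val ≡ 3 * i.val + 1 [MOD N]) := by
    rw [collatzT_cond hN]
    split_ifs with h <;> simp
  have e2 : (2 * j.val ≡ 3 * (i.val + N) + 1 [MOD N]) ↔ (2 * j.val ≡ 3 * i.val + 1 [MOD N]) := by
    rw [show 3 * (i.val + N) + 1 = 3 * i.val + 1 + N + N + N by ring,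
      modeq_add_right_iff, modeq_add_right_iff, modeq_add_right_iff]
  have hcond2 : (collatzT (i.val + N) % N = j.val) ↔
      (if i.val % 2 = 0 then 2 * j.val ≡ 3 * i.val + 1 [MOD N] else 2 * j.val ≡ i.val [MOD N]) := by
    rw [collatzT_cond hN]
    have hmod : (i.val + N) % 2 = 1 - i.val % 2 := by omega
    rw [hmod]
    rcases Nat.even_or_odd i.val with he | ho
    · have h0 : i.val % 2 = 0 := Nat.even_iff.1 he
      rw [h0]
      simp only [if_neg (by omega : ¬(1 - 0 = 0)), if_pos rfl]
      exact e2
    · have h0 : i.val % 2 = 1 := Nat.odd_iff.1 ho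
      rw [h0]
      simp only [if_pos rfl, if_neg (by omega : ¬(1 = 0))]
      exact modeq_add_right_iff
  rcases Nat.even_or_odd i.val with he | ho
  · have h0 : i.val % 2 = 0 := Nat.even_iff.1 he
    simp only [h0, if_pos rfl] at hcond1 hcond2
    by_cases c1 : 2 * j.val ≡ i.val [MOD N] <;> by_cases c2 : 2 * j.val ≡ 3 * i.val + 1 [MOD N] <;>
      simp [hcond1, hcond2, c1, c2, filter_singleton, hne, card_pair hne]
  · have h0 : i.val % 2 = 1 := Nat.odd_iff.1 ho
    rw [h0] at hcond1 hcond2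
    simp only [if_neg (by omega : ¬(1 = 0))] at hcond1 hcond2
    by_cases c1 : 2 * j.val ≡ i.val [MOD N] <;> by_cases c2 : 2 * j.val ≡ 3 * i.val + 1 [MOD N] <;>
      simp [hcond1, hcond2, c1, c2, filter_singleton, hne, card_pair hne]

section helpers
variable {N : ℕ}


lemma solve_iff (hN : Odd N) (a : ℕ) (k : Fin N) :
    (2 * k.val ≡ a [MOD N]) ↔ k.val = (((N + 1) / 2) * a) % N := by
  have hNo := Nat.odd_iff.1 hN
  have h2 : 2 * ((N + 1) / 2) = N + 1 := by omega
  constructor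
  · intro h
    have h1 : ((N+1)/2) * (2 * k.val) ≡ ((N+1)/2) * a [MOD N] := h.mul_left _
    have h3 : (k.val : ℕ) ≡ ((N+1)/2) * (2 * k.val) [MOD N] := by
      show k.val % N = _ % N
      rw [show ((N+1)/2) * (2 * k.val) = k.val + k.val * N by
        have : ((N+1)/2) * (2 * k.val) = (2 * ((N+1)/2)) * k.val := by ring
        rw [this, h2]; ring]
      rw [Nat.add_mul_mod_self_right]
    have h4 := h3.trans h1
    have h5 := h4
    unfold Nat.ModEq at h5
    rw [Nat.mod_eq_of_lt k.isLt] at h5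
    exact h5
  · intro h
    have h1 : 2 * k.val ≡ 2 * (((N+1)/2) * a) [MOD N] := by
      rw [h]
      exact (Nat.mod_modEq _ N).mul_left 2
    refine h1.trans ?_
    show (2 * (((N+1)/2) * a)) % N = a % N
    rw [show 2 * (((N+1)/2) * a) = (2 * ((N+1)/2)) * a by ring, h2,
      show (N + 1) * a = a + a * N by ring, Nat.add_mul_mod_self_right]

/-- The reduction matrix. -/
def redMat (N N₀ : ℕ) : Matrix (Fin N) (Fin N₀) ℤ :=
  fun i j => if i.val % N₀ = j.val then 1 else 0

lemma collapse {N₀ : ℕ} (hN : Odd N) (hN₀ : Odd N₀) (hdvd : N₀ ∣ N) (a : ℕ) (j : Fin N₀) :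
    (∑ k : Fin N, (if 2 * k.val ≡ a [MOD N] then (1:ℤ) else 0) *
        (if k.val % N₀ = j.val then 1 else 0))
      = if 2 * j.val ≡ a [MOD N₀] then 1 else 0 := by
  have hNpos : 0 < N := hN.pos
  set k₀ : Fin N := ⟨(((N + 1) / 2) * a) % N, Nat.mod_lt _ hNpos⟩ with hk₀
  have hsum : (∑ k : Fin N, (if 2 * k.val ≡ a [MOD N] then (1:ℤ) else 0) *
      (if k.val % N₀ = j.val then 1 else 0))
      = if k₀.val % N₀ = j.val then 1 else 0 := by
    rw [Finset.sum_eq_single k₀]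
    · rw [if_pos ((solve_iff hN a k₀).2 rfl), one_mul]
    · intro k _ hk
      rw [if_neg, zero_mul]
      intro hc
      exact hk (Fin.ext ((solve_iff hN a k).1 hc))
    · intro h
      exact absurd (Finset.mem_univ _) h
  rw [hsum]
  -- now k₀ % N₀ = j ↔ 2j ≡ a [MOD N₀]
  have h2k₀ : 2 * k₀.val ≡ a [MOD N] := (solve_iff hN a k₀).2 rfl
  have h2k₀' : 2 * k₀.val ≡ a [MOD N₀] := h2k₀.of_dvd hdvd
  have hiff : k₀.val % N₀ = j.val ↔ 2 * j.val ≡ a [MOD N₀] := by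
    constructor
    · intro h
      have : (j.val : ℕ) ≡ k₀.val [MOD N₀] := by
        show j.val % N₀ = k₀.val % N₀
        rw [h, Nat.mod_eq_of_lt j.isLt]
      exact (this.mul_left 2).trans h2k₀'
    · intro h
      have hg : Nat.gcd N₀ 2 = 1 := hN₀.coprime_two_right
      have : (j.val : ℕ) ≡ k₀.val [MOD N₀] :=
        (h.trans h2k₀'.symm).cancel_left_of_coprime hg
      have h5 := this.symm
      unfold Nat.ModEq at h5
      rw [Nat.mod_eq_of_lt j.isLt] at h5
      exact h5
  by_cases hc : 2 * j.val ≡ a [MOD N₀]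
  · rw [if_pos hc, if_pos (hiff.2 hc)]
  · rw [if_neg hc, if_neg (fun h => hc (hiff.1 h))]

lemma collatzMat_apply' {N : ℕ} (hN : Odd N) (i j : Fin N) :
    collatzMat N i j =
      (if 2 * j.val ≡ i.val [MOD N] then 1 else 0) +
      (if 2 * j.val ≡ 3 * i.val + 1 [MOD N] then 1 else 0) := collatzMat_apply hN i j

lemma intertwine {N₀ : ℕ} (hN : Odd N) (hN₀ : Odd N₀) (hdvd : N₀ ∣ N) :
    collatzMat N * redMat N N₀ = redMat N N₀ * collatzMat N₀ := by
  have hN₀pos : 0 < N₀ := hN₀.pos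
  ext i j
  rw [Matrix.mul_apply, Matrix.mul_apply]
  have hL : ∑ k : Fin N, collatzMat N i k * redMat N N₀ k j
      = (if 2 * j.val ≡ i.val [MOD N₀] then (1:ℤ) else 0)
        + (if 2 * j.val ≡ 3 * i.val + 1 [MOD N₀] then 1 else 0) := by
    have : ∀ k : Fin N, collatzMat N i k * redMat N N₀ k j
        = (if 2 * k.val ≡ i.val [MOD N] then (1:ℤ) else 0) * (if k.val % N₀ = j.val then 1 else 0)
          + (if 2 * k.val ≡ 3 * i.val + 1 [MOD N] then (1:ℤ) else 0) *
            (if k.val % N₀ = j.val then 1 else 0) := by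
      intro k
      rw [collatzMat_apply' hN, redMat, add_mul]
    simp_rw [this]
    rw [Finset.sum_add_distrib, collapse hN hN₀ hdvd i.val j, collapse hN hN₀ hdvd (3*i.val+1) j]
  rw [hL]
  -- RHS collapses at m₀ = i % N₀
  set m₀ : Fin N₀ := ⟨i.val % N₀, Nat.mod_lt _ hN₀pos⟩ with hm₀
  have hR : ∑ m : Fin N₀, redMat N N₀ i m * collatzMat N₀ m j = collatzMat N₀ m₀ j := by
    rw [Finset.sum_eq_single m₀]
    · rw [redMat, if_pos rfl, one_mul]
    · intro m _ hm
      rw [redMat]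
      rw [if_neg, zero_mul]
      intro hc
      exact hm (Fin.ext hc.symm)
    · intro h; exact absurd (Finset.mem_univ _) h
  rw [hR, collatzMat_apply' hN₀]
  have e1 : (2 * j.val ≡ m₀.val [MOD N₀]) ↔ (2 * j.val ≡ i.val [MOD N₀]) := by
    constructor
    · intro h; exact h.trans (Nat.mod_modEq _ _)
    · intro h; exact h.trans (Nat.mod_modEq _ _).symm
  have e2 : (2 * j.val ≡ 3 * m₀.val + 1 [MOD N₀]) ↔ (2 * j.val ≡ 3 * i.val + 1 [MOD N₀]) := by
    have hm : (3 * m₀.val + 1 : ℕ) ≡ 3 * i.val + 1 [MOD N₀] :=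
      ((Nat.mod_modEq i.val N₀).mul_left 3).add_right 1
    constructor
    · intro h; exact h.trans hm
    · intro h; exact h.trans hm.symm
  rw [show (if 2 * j.val ≡ m₀.val [MOD N₀] then (1:ℤ) else 0)
      = (if 2 * j.val ≡ i.val [MOD N₀] then 1 else 0) by
    by_cases h : 2 * j.val ≡ i.val [MOD N₀]
    · rw [if_pos h, if_pos (e1.2 h)]
    · rw [if_neg h, if_neg (fun hh => h (e1.1 hh))]]
  rw [show (if 2 * j.val ≡ 3 * m₀.val + 1 [MOD N₀] then (1:ℤ) else 0)
      = (if 2 * j.val ≡ 3 * i.val + 1 [MOD N₀] then 1 else 0) by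
    by_cases h : 2 * j.val ≡ 3 * i.val + 1 [MOD N₀]
    · rw [if_pos h, if_pos (e2.2 h)]
    · rw [if_neg h, if_neg (fun hh => h (e2.1 hh))]]

lemma charpoly_conj {n : Type*} [DecidableEq n] [Fintype n] {R : Type*} [CommRing R]
    (U V M : Matrix n n R) (hUV : U * V = 1) (hVU : V * U = 1) :
    (V * M * U).charpoly = M.charpoly := by
  have key : charmatrix (V * M * U) =
      V.map Polynomial.C * charmatrix M * U.map Polynomial.C := by
    rw [charmatrix, charmatrix, mul_sub, sub_mul]
    congr 1
    · have hcomm : ∀ A : Matrix n n R[X], Matrix.scalar n (X : R[X]) * A = A * Matrix.scalar n X :=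
        fun A => (Matrix.scalar_commute (X : R[X]) (fun r => Commute.all _ _) A).eq
      refine Eq.symm ?_
      calc V.map Polynomial.C * Matrix.scalar n (X : R[X]) * U.map Polynomial.C
          = V.map Polynomial.C * (Matrix.scalar n (X : R[X]) * U.map Polynomial.C) := by
            rw [mul_assoc]
        _ = V.map Polynomial.C * (U.map Polynomial.C * Matrix.scalar n (X : R[X])) := by
            rw [hcomm]
        _ = (V * U).map Polynomial.C * Matrix.scalar n (X : R[X]) := by
            rw [← mul_assoc, ← Matrix.map_mul]
        _ = Matrix.scalar n (X : R[X]) := by rw [hVU, Matrix.map_one _ (map_zero _) (map_one _), one_mul]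
    · show (C : R →+* R[X]).mapMatrix (V * M * U) = _
      simp only [RingHom.mapMatrix_apply]
      rw [Matrix.map_mul, Matrix.map_mul]
  rw [Matrix.charpoly, Matrix.charpoly, key, Matrix.det_mul, Matrix.det_mul]
  have hdet : (V.map Polynomial.C).det * (U.map Polynomial.C).det = 1 := by
    rw [← Matrix.det_mul, ← Matrix.map_mul, hVU, Matrix.map_one _ (map_zero _) (map_one _),
      Matrix.det_one]
  calc (V.map Polynomial.C).det * (charmatrix M).det * (U.map Polynomial.C).det
      = (V.map Polynomial.C).det * (U.map Polynomial.C).det * (charmatrix M).det := by ring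
    _ = (charmatrix M).det := by rw [hdet, one_mul]

end helpers

theorem charpoly_dvd_of_dvd (N N₀ : ℕ) (hN : Odd N) (hN₀ : Odd N₀) (hdvd : N₀ ∣ N) :
    (collatzMat N₀).charpoly ∣ (collatzMat N).charpoly := by
  have hle : N₀ ≤ N := Nat.le_of_dvd hN.pos hdvd
  have hNK : N₀ + (N - N₀) = N := by omega
  set K := N - N₀ with hK
  let E : Fin N₀ ⊕ Fin K ≃ Fin N := finSumFinEquiv.trans (finCongr hNK)
  let M' := Matrix.reindex E.symm E.symm (collatzMat N)
  let R' : Matrix (Fin N₀ ⊕ Fin K) (Fin N₀) ℤ := Matrix.of fun s j => redMat N N₀ (E s) j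
  let Y : Matrix (Fin K) (Fin N₀) ℤ := Matrix.of fun k j => redMat N N₀ (E (Sum.inr k)) j
  have hR' : R' = Matrix.fromRows (1 : Matrix (Fin N₀) (Fin N₀) ℤ) Y := by
    ext s j
    cases s with
    | inl a =>
      show redMat N N₀ (E (Sum.inl a)) j = (1 : Matrix (Fin N₀) (Fin N₀) ℤ) a j
      have hval : (E (Sum.inl a)).val = a.val := by
        simp [E, finSumFinEquiv]
      rw [redMat, Matrix.one_apply]
      simp only [hval, Nat.mod_eq_of_lt a.isLt]
      by_cases h : a = j
      · rw [if_pos (by rw [h]), if_pos h]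
      · rw [if_neg (fun hh => h (Fin.ext hh)), if_neg h]
    | inr k => rfl
  have hint : M' * R' = R' * collatzMat N₀ := by
    ext s j
    rw [Matrix.mul_apply]
    have h1 : ∑ t, M' s t * R' t j = ∑ k : Fin N, collatzMat N (E s) k * redMat N N₀ k j := by
      refine Fintype.sum_equiv E _ _ (fun t => ?_)
      show M' s t * R' t j = _
      have : M' s t = collatzMat N (E s) (E t) := by simp [M']
      rw [this]
      rfl
    rw [h1, ← Matrix.mul_apply, intertwine hN hN₀ hdvd, Matrix.mul_apply]
    rfl
  set A := M'.toBlocks₁₁ with hA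
  set B := M'.toBlocks₁₂ with hB
  set Cb := M'.toBlocks₂₁ with hCb
  set D := M'.toBlocks₂₂ with hD
  have hM' : M' = Matrix.fromBlocks A B Cb D := (Matrix.fromBlocks_toBlocks M').symm
  rw [hM', hR', Matrix.fromBlocks_mul_fromRows, Matrix.fromRows_mul] at hint
  obtain ⟨eq1, eq2⟩ := Matrix.fromRows_inj hint
  rw [Matrix.mul_one, Matrix.one_mul] at eq1
  rw [Matrix.mul_one] at eq2
  -- eq1 : A + B * Y = collatzMat N₀, eq2 : Cb + D * Y = Y * collatzMat N₀
  let U := Matrix.fromBlocks (1 : Matrix (Fin N₀) (Fin N₀) ℤ) 0 Y (1 : Matrix (Fin K) (Fin K) ℤ)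
  let V := Matrix.fromBlocks (1 : Matrix (Fin N₀) (Fin N₀) ℤ) 0 (-Y) (1 : Matrix (Fin K) (Fin K) ℤ)
  have hUV : U * V = 1 := by
    show Matrix.fromBlocks _ _ _ _ * Matrix.fromBlocks _ _ _ _ = 1
    rw [Matrix.fromBlocks_multiply]
    simp [Matrix.fromBlocks_one]
  have hVU : V * U = 1 := by
    show Matrix.fromBlocks _ _ _ _ * Matrix.fromBlocks _ _ _ _ = 1
    rw [Matrix.fromBlocks_multiply]
    simp [Matrix.fromBlocks_one]
  have key : V * M' * U = Matrix.fromBlocks (collatzMat N₀) B 0 (D - Y * B) := by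
    rw [hM']
    show Matrix.fromBlocks _ _ _ _ * Matrix.fromBlocks _ _ _ _ * Matrix.fromBlocks _ _ _ _ = _
    rw [Matrix.fromBlocks_multiply, Matrix.fromBlocks_multiply]
    rw [Matrix.fromBlocks_inj]
    refine ⟨?_, ?_, ?_, ?_⟩
    · simp only [Matrix.one_mul, Matrix.zero_mul, add_zero, zero_add, Matrix.mul_one]
      exact eq1
    · simp only [Matrix.one_mul, Matrix.zero_mul, add_zero, zero_add, Matrix.mul_zero,
        Matrix.mul_one]
    · have h3 : Cb + D * Y = Y * A + Y * (B * Y) := by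
        rw [eq2, ← eq1, Matrix.mul_add]
      rw [← sub_eq_zero] at h3
      simp only [Matrix.one_mul, Matrix.zero_mul, add_zero, zero_add, Matrix.mul_one,
        Matrix.neg_mul, Matrix.add_mul, Matrix.mul_assoc]
      rw [← h3]
      abel
    · simp only [Matrix.mul_zero, zero_add, Matrix.mul_one, Matrix.one_mul, Matrix.neg_mul]
      abel
  have h1 : (collatzMat N).charpoly = M'.charpoly := (Matrix.charpoly_reindex E.symm _).symm
  have h2 : M'.charpoly = (V * M' * U).charpoly := (charpoly_conj U V M' hUV hVU).symm
  rw [h1, h2, key, Matrix.charpoly_fromBlocks_zero₂₁]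
  exact Dvd.intro _ rfl
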